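/- arXiv:2203.13129 — 5 statements merged into one kernel-verified Lean document; each statement's English description precedes it below -/
import Mathlib

section
/- Let Λ be a compact metric space, E : ℝ^r × Λ → ℝ jointly continuous, and L : ℝ^r × Λ → ℝ jointly continuous such that for each λ ∈ Λ the function L(·, λ) has a unique global minimizer w_λ, and {w_λ : λ ∈ Λ} is bounded. Then the response function f(λ) = E(w_λ, λ) is continuous on Λ and attains a minimum on Λ. -/
theorem stmt_1 {Λ : Type*} [MetricSpace Λ] [CompactSpace Λ] [Nonempty Λ] {r : ℕ}
    (E L : (Fin r → ℝ) × Λ → ℝ) (hE : Continuous E) (hL : Continuous L)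
    (w : Λ → (Fin r → ℝ))
    (hmin : ∀ lam : Λ, ∀ u : Fin r → ℝ, L (w lam, lam) ≤ L (u, lam))
    (huniq : ∀ lam : Λ, ∀ u : Fin r → ℝ,
      (∀ v : Fin r → ℝ, L (u, lam) ≤ L (v, lam)) → u = w lam)
    (hbdd : Bornology.IsBounded (Set.range w)) :
    Continuous (fun lam : Λ => E (w lam, lam)) ∧
      ∃ lamStar : Λ, ∀ lam : Λ, E (w lamStar, lamStar) ≤ E (w lam, lam) := by
  have hwcont : Continuous w := by
    rw [continuous_iff_seqContinuous]
    intro x lam hx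
    by_contra hcon
    rw [Metric.tendsto_atTop] at hcon
    push_neg at hcon
    obtain ⟨ε, hε, hfreq⟩ := hcon
    have hfreq' : ∃ᶠ n in Filter.atTop, ε ≤ dist (w (x n)) (w lam) := by
      rw [Filter.frequently_atTop]
      intro N; obtain ⟨n, hn, h⟩ := hfreq N; exact ⟨n, hn, h⟩
    obtain ⟨φ, hφ, hφε⟩ := Filter.extraction_of_frequently_atTop hfreq'
    have hK : IsCompact (closure (Set.range w)) :=
      Metric.isCompact_of_isClosed_isBounded isClosed_closure hbdd.closure
    obtain ⟨z, hz, ψ, hψ, hzt⟩ := hK.tendsto_subseq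
      (x := fun n => w (x (φ n)))
      (fun n => subset_closure (Set.mem_range_self (x (φ n))))
    have hxt : Filter.Tendsto (fun n => x (φ (ψ n))) Filter.atTop (nhds lam) :=
      hx.comp ((hφ.comp hψ).tendsto_atTop)
    have hzt' : Filter.Tendsto (fun n => w (x (φ (ψ n)))) Filter.atTop (nhds z) := hzt
    have hz_min : ∀ u, L (z, lam) ≤ L (u, lam) := by
      intro u
      have h1 : Filter.Tendsto (fun n => L (w (x (φ (ψ n))), x (φ (ψ n))))
          Filter.atTop (nhds (L (z, lam))) :=
        (hL.tendsto _).comp (hzt'.prodMk_nhds hxt)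
      have h2 : Filter.Tendsto (fun n => L (u, x (φ (ψ n)))) Filter.atTop
          (nhds (L (u, lam))) :=
        (hL.tendsto _).comp (tendsto_const_nhds.prodMk_nhds hxt)
      exact le_of_tendsto_of_tendsto h1 h2 (Filter.Eventually.of_forall fun n => hmin _ u)
    have hz_eq : z = w lam := huniq lam z hz_min
    have hd : Filter.Tendsto (fun n => dist (w (x (φ (ψ n)))) (w lam))
        Filter.atTop (nhds 0) := by
      rw [← hz_eq]
      exact (tendsto_iff_dist_tendsto_zero.mp hzt')
    have : ε ≤ 0 := ge_of_tendsto hd (Filter.Eventually.of_forall fun n => hφε (ψ n))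
    linarith
  have hf : Continuous (fun lam : Λ => E (w lam, lam)) :=
    hE.comp (hwcont.prodMk continuous_id)
  refine ⟨hf, ?_⟩
  obtain ⟨lamStar, -, h⟩ := isCompact_univ.exists_isMinOn Set.univ_nonempty hf.continuousOn
  exact ⟨lamStar, fun lam => h (Set.mem_univ lam)⟩
end

section
/- Fix w^t ∈ ℝ^r with w^t_a > 0, x ∈ ℝ^m with x_j ≥ 0, H ∈ ℝ^{r×m} with H_{aj} ≥ 0 and Σ_b w^t_b H_{bj} > 0 for all j, and λ ≥ 0. Define α_{aj} = (w^t_a H_{aj}) / (Σ_b w^t_b H_{bj}) and G(w, w^t) = Σ_j Σ_a w_a H_{aj} − Σ_j Σ_a x_j α_{aj} (log(w_a H_{aj}) − log α_{aj}) + λ Σ_a w_a. Then for all w with w_a > 0: G(w, w^t) ≥ F(w), where F(w) = Σ_j (−x_j log(Σ_a w_a H_{aj}) + Σ_a w_a H_{aj}) + λ Σ_a w_a. -/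
open Finset in
theorem stmt_7 {r m : ℕ} (wt : Fin r → ℝ) (x : Fin m → ℝ) (H : Fin r → Fin m → ℝ)
    (lam : ℝ) (hwt : ∀ a, 0 < wt a) (hx : ∀ j, 0 ≤ x j) (hH : ∀ a j, 0 ≤ H a j)
    (hden : ∀ j, 0 < ∑ b, wt b * H b j) (hlam : 0 ≤ lam)
    (α : Fin r → Fin m → ℝ)
    (hα : ∀ a j, α a j = wt a * H a j / ∑ b, wt b * H b j)
    (w : Fin r → ℝ) (hw : ∀ a, 0 < w a) :
    (∑ j, (-(x j) * Real.log (∑ a, w a * H a j) + ∑ a, w a * H a j))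
        + lam * ∑ a, w a
      ≤ (∑ j, ∑ a, w a * H a j)
        - (∑ j, ∑ a, x j * α a j * (Real.log (w a * H a j) - Real.log (α a j)))
        + lam * ∑ a, w a := by
  have hS' : ∀ j, 0 < ∑ a, w a * H a j := by
    intro j
    obtain ⟨b, hb⟩ : ∃ b, 0 < H b j := by
      by_contra hc
      push_neg at hc
      have hz := hden j
      have hzz : ∀ b, H b j = 0 := fun b => le_antisymm (hc b) (hH b j)
      simp [hzz] at hz
    exact Finset.sum_pos' (fun a _ => mul_nonneg (hw a).le (hH a j))
      ⟨b, Finset.mem_univ b, mul_pos (hw b) hb⟩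
  have hαsum : ∀ j, ∑ a, α a j = 1 := by
    intro j
    simp only [hα, ← Finset.sum_div]
    exact div_self (hden j).ne'
  have hterm : ∀ j a, α a j * (Real.log (w a * H a j) - Real.log (α a j))
      ≤ w a * H a j / (∑ b, w b * H b j) - α a j
        + α a j * Real.log (∑ b, w b * H b j) := by
    intro j a
    rcases eq_or_lt_of_le (hH a j) with h0 | h0
    · simp [hα, ← h0]
    · have hαpos : 0 < α a j := by
        rw [hα]; exact div_pos (mul_pos (hwt a) h0) (hden j)
      have hwH : 0 < w a * H a j := mul_pos (hw a) h0
      have hlog : Real.log (w a * H a j / (α a j * (∑ b, w b * H b j)))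
          ≤ w a * H a j / (α a j * ∑ b, w b * H b j) - 1 :=
        Real.log_le_sub_one_of_pos (div_pos hwH (mul_pos hαpos (hS' j)))
      rw [Real.log_div hwH.ne' (mul_pos hαpos (hS' j)).ne',
        Real.log_mul hαpos.ne' (hS' j).ne'] at hlog
      have h2 := mul_le_mul_of_nonneg_left hlog hαpos.le
      have h3 : α a j * (w a * H a j / (α a j * ∑ b, w b * H b j) - 1)
          = w a * H a j / (∑ b, w b * H b j) - α a j := by
        rw [mul_sub, mul_one, mul_div_assoc', mul_div_mul_left _ _ hαpos.ne']
      nlinarith [h2, h3]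
  have hmain : ∀ j, ∑ a, x j * α a j * (Real.log (w a * H a j) - Real.log (α a j))
      ≤ x j * Real.log (∑ a, w a * H a j) := by
    intro j
    have hsum : ∑ a, α a j * (Real.log (w a * H a j) - Real.log (α a j))
        ≤ Real.log (∑ a, w a * H a j) := by
      have h1 := Finset.sum_le_sum (s := Finset.univ) (fun a _ => hterm j a)
      have h2 : ∑ a, (w a * H a j / (∑ b, w b * H b j) - α a j
          + α a j * Real.log (∑ b, w b * H b j))
          = Real.log (∑ a, w a * H a j) := by
        rw [Finset.sum_add_distrib, Finset.sum_sub_distrib, ← Finset.sum_div,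
          ← Finset.sum_mul, hαsum j, div_self (hS' j).ne']
        ring
      linarith
    calc ∑ a, x j * α a j * (Real.log (w a * H a j) - Real.log (α a j))
        = x j * ∑ a, α a j * (Real.log (w a * H a j) - Real.log (α a j)) := by
          rw [Finset.mul_sum]; apply Finset.sum_congr rfl; intro a _; ring
      _ ≤ x j * Real.log (∑ a, w a * H a j) :=
          mul_le_mul_of_nonneg_left hsum (hx j)
  have hfin := Finset.sum_le_sum (s := Finset.univ) (fun j _ => hmain j)
  have hsplit : ∑ j, (-(x j) * Real.log (∑ a, w a * H a j) + ∑ a, w a * H a j)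
      = -(∑ j, x j * Real.log (∑ a, w a * H a j)) + ∑ j, ∑ a, w a * H a j := by
    rw [Finset.sum_add_distrib]
    congr 1
    rw [← Finset.sum_neg_distrib]
    exact Finset.sum_congr rfl fun j _ => by ring
  linarith [hfin, hsplit]
end

section
/- Under the assumptions of the auxiliary function lemma, the unique critical point of w ↦ G(w, w^t) on the positive orthant is given componentwise by w_a = w^t_a · (Σ_k H_{ak} x_k / (Σ_b w^t_b H_{bk})) / (Σ_k H_{ak} + λ), provided Σ_k H_{ak} + λ > 0 and the numerator is positive. -/
open Finset in
theorem stmt_10 {r m : ℕ} (wt : Fin r → ℝ) (x : Fin m → ℝ) (H : Fin r → Fin m → ℝ)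
    (lam : ℝ) (hwt : ∀ a, 0 < wt a) (hx : ∀ j, 0 ≤ x j) (hH : ∀ a j, 0 ≤ H a j)
    (hden : ∀ j, 0 < ∑ b, wt b * H b j) (hlam : 0 ≤ lam)
    (α : Fin r → Fin m → ℝ)
    (hα : ∀ a j, α a j = wt a * H a j / ∑ b, wt b * H b j)
    (hpos : ∀ a, (0:ℝ) < ∑ k, H a k + lam)
    (hnum : ∀ a, (0:ℝ) < ∑ k, H a k * x k / ∑ b, wt b * H b k)
    (wstar : Fin r → ℝ)
    (hstar : ∀ a, wstar a = wt a * (∑ k, H a k * x k / ∑ b, wt b * H b k)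
        / (∑ k, H a k + lam)) :
    -- wstar is a critical point of w ↦ G(w, wt) on the positive orthant ...
    ((∀ a, 0 < wstar a) ∧
      (∀ a, (∑ j, H a j) - (∑ j, x j * α a j) / wstar a + lam = 0)) ∧
    -- ... and it is the unique such critical point
    (∀ w : Fin r → ℝ, (∀ a, 0 < w a) →
      (∀ a, (∑ j, H a j) - (∑ j, x j * α a j) / w a + lam = 0) → w = wstar) := by
  have hT : ∀ a, (∑ j, x j * α a j) = wt a * ∑ k, H a k * x k / ∑ b, wt b * H b k := by
    intro a
    rw [Finset.mul_sum]
    refine Finset.sum_congr rfl fun j _ => ?_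
    rw [hα]
    have := (hden j).ne'
    field_simp
  have hN : ∀ a, 0 < wt a * ∑ k, H a k * x k / ∑ b, wt b * H b k :=
    fun a => mul_pos (hwt a) (hnum a)
  have hwpos : ∀ a, 0 < wstar a := by
    intro a; rw [hstar]; exact div_pos (hN a) (hpos a)
  have hcrit : ∀ a, (∑ j, H a j) - (∑ j, x j * α a j) / wstar a + lam = 0 := by
    intro a
    rw [hT, hstar]
    have h1 := (hN a).ne'
    have h2 := (hpos a).ne'
    field_simp
    rw [mul_div_cancel_left₀ _ h1]
    ring
  refine ⟨⟨hwpos, hcrit⟩, ?_⟩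
  intro w hw heq
  funext a
  have h := heq a
  rw [hT] at h
  have hw' := (hw a).ne'
  rw [hstar]
  rw [eq_div_iff (hpos a).ne']
  have : (∑ j, H a j + lam) * w a = wt a * ∑ k, H a k * x k / ∑ b, wt b * H b k := by
    field_simp at h
    linarith
  linarith [this]
end

section
/- The penalized KL-NMF objective F(w) = Σ_j (−x_j log(Σ_a w_a H_{aj}) + Σ_a w_a H_{aj}) + λ Σ_a w_a is non-increasing under the multiplicative update w_a ← w_a · (Σ_k H_{ak} x_k / (Σ_b w_b H_{bk})) / (Σ_k H_{ak} + λ): that is, if w' is defined by this update from w (with all relevant quantities positive), then F(w') ≤ F(w). -/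
open Finset

/-- Auxiliary: `t * (log s - log t) + t - s ≤ 0` for `s > 0`, `t ≥ 0`. -/
lemma stmt_11_aux1 {s t : ℝ} (hs : 0 < s) (ht : 0 ≤ t) :
    t * (Real.log s - Real.log t) + t - s ≤ 0 := by
  rcases ht.eq_or_lt with h | h
  · rw [← h]; simp; linarith
  · have hlog := Real.log_le_sub_one_of_pos (show 0 < s / t by positivity)
    rw [Real.log_div hs.ne' h.ne'] at hlog
    have h2 : t * (Real.log s - Real.log t) ≤ t * (s / t - 1) :=
      mul_le_mul_of_nonneg_left hlog h.le
    have h3 : t * (s / t - 1) = s - t := by field_simp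
    linarith

open Finset in
theorem stmt_11 {r m : ℕ} (x : Fin m → ℝ) (H : Fin r → Fin m → ℝ) (lam : ℝ)
    (hx : ∀ j, 0 ≤ x j) (hH : ∀ a j, 0 ≤ H a j) (hlam : 0 ≤ lam)
    (w : Fin r → ℝ) (hw : ∀ a, 0 < w a)
    (hden : ∀ k, 0 < ∑ b, w b * H b k)
    (hpos : ∀ a, (0:ℝ) < ∑ k, H a k + lam)
    (w' : Fin r → ℝ)
    (hw' : ∀ a, w' a = w a * (∑ k, H a k * x k / ∑ b, w b * H b k)
        / (∑ k, H a k + lam)) :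
    (∑ j, (-(x j) * Real.log (∑ a, w' a * H a j) + ∑ a, w' a * H a j))
        + lam * ∑ a, w' a
      ≤ (∑ j, (-(x j) * Real.log (∑ a, w a * H a j) + ∑ a, w a * H a j))
        + lam * ∑ a, w a := by
  -- nonnegativity of w'
  have hw'nn : ∀ a, 0 ≤ w' a := by
    intro a
    rw [hw' a]
    apply div_nonneg _ (hpos a).le
    apply mul_nonneg (hw a).le
    apply Finset.sum_nonneg
    intro k _
    exact div_nonneg (mul_nonneg (hH a k) (hx k)) (hden k).le
  -- positivity of w' a when H a j > 0 and x j > 0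
  have hw'pos : ∀ a j, 0 < H a j → 0 < x j → 0 < w' a := by
    intro a j hHaj hxj
    rw [hw' a]
    apply div_pos _ (hpos a)
    apply mul_pos (hw a)
    apply Finset.sum_pos'
    · intro k _
      exact div_nonneg (mul_nonneg (hH a k) (hx k)) (hden k).le
    · exact ⟨j, Finset.mem_univ j, div_pos (mul_pos hHaj hxj) (hden j)⟩
  -- positivity of the new denominators when x j > 0
  have hS'pos : ∀ j, 0 < x j → 0 < ∑ a, w' a * H a j := by
    intro j hxj
    have h0 : (∑ b : Fin r, (0:ℝ)) < ∑ b, w b * H b j := by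
      simpa using hden j
    obtain ⟨b, -, hbpos⟩ := Finset.exists_lt_of_sum_lt h0
    have hHbj : 0 < H b j := by
      rcases mul_pos_iff.mp hbpos with ⟨_, h⟩ | ⟨h, _⟩
      · exact h
      · exact absurd (hw b) (not_lt.mpr h.le)
    apply Finset.sum_pos'
    · intro a _; exact mul_nonneg (hw'nn a) (hH a j)
    · exact ⟨b, Finset.mem_univ b, mul_pos (hw'pos b j hHbj hxj) hHbj⟩
  -- the identity c_a = w'_a * d_a
  have hcd : ∀ a, w' a * (∑ k, H a k + lam)
      = ∑ j, x j * (w a * H a j / (∑ b, w b * H b j)) := by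
    intro a
    rw [hw' a, div_mul_cancel₀ _ (hpos a).ne', Finset.mul_sum]
    exact Finset.sum_congr rfl fun j _ => by ring
  -- key per-j Jensen inequality
  have hkey : ∀ j, x j * (Real.log (∑ b, w b * H b j) - Real.log (∑ a, w' a * H a j))
      ≤ ∑ a, x j * (w a * H a j / (∑ b, w b * H b j))
          * (Real.log (w a) - Real.log (w' a)) := by
    intro j
    rcases (hx j).eq_or_lt with hxz | hxj
    · simp [← hxz]
    · have hD := hden j
      have hS' := hS'pos j hxj
      have per : ∀ a ∈ Finset.univ,
          (w a * H a j / (∑ b, w b * H b j))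
              * (Real.log (∑ b, w b * H b j) - Real.log (∑ a, w' a * H a j)
                 - (Real.log (w a) - Real.log (w' a)))
          ≤ w' a * H a j / (∑ a, w' a * H a j)
              - w a * H a j / (∑ b, w b * H b j) := by
        intro a _
        rcases (hH a j).eq_or_lt with hz | hHaj
        · rw [← hz]
          simp
        · have hwa := hw a
          have hw'a := hw'pos a j hHaj hxj
          set D := ∑ b, w b * H b j with hDdef
          set S := ∑ a, w' a * H a j with hSdef
          have hu : 0 < w' a * D / (w a * S) := by positivity
          have hlog := Real.log_le_sub_one_of_pos hu
          have hexp : Real.log (w' a * D / (w a * S))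
              = Real.log D - Real.log S - (Real.log (w a) - Real.log (w' a)) := by
            rw [Real.log_div (by positivity) (by positivity),
              Real.log_mul hw'a.ne' hD.ne', Real.log_mul hwa.ne' hS'.ne']
            ring
          rw [hexp] at hlog
          have hmul := mul_le_mul_of_nonneg_left hlog
            (show (0:ℝ) ≤ w a * H a j / D by positivity)
          calc (w a * H a j / D)
                * (Real.log D - Real.log S - (Real.log (w a) - Real.log (w' a)))
              ≤ (w a * H a j / D) * (w' a * D / (w a * S) - 1) := hmul
            _ = w' a * H a j / S - w a * H a j / D := by
                field_simp
      have big := Finset.sum_le_sum per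
      have hsum1 : ∑ a, w a * H a j / (∑ b, w b * H b j) = 1 := by
        rw [← Finset.sum_div, div_self hD.ne']
      have hsum2 : ∑ a, w' a * H a j / (∑ a, w' a * H a j) = 1 := by
        rw [← Finset.sum_div, div_self hS'.ne']
      rw [Finset.sum_sub_distrib, hsum1, hsum2, sub_self] at big
      have big2 : ∑ a, (w a * H a j / (∑ b, w b * H b j))
          * (Real.log (∑ b, w b * H b j) - Real.log (∑ a, w' a * H a j)
             - (Real.log (w a) - Real.log (w' a)))
          = (Real.log (∑ b, w b * H b j) - Real.log (∑ a, w' a * H a j))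
            - ∑ a, (w a * H a j / (∑ b, w b * H b j))
                * (Real.log (w a) - Real.log (w' a)) := by
        calc ∑ a, (w a * H a j / (∑ b, w b * H b j))
              * (Real.log (∑ b, w b * H b j) - Real.log (∑ a, w' a * H a j)
                 - (Real.log (w a) - Real.log (w' a)))
            = ∑ a, ((w a * H a j / (∑ b, w b * H b j))
                * (Real.log (∑ b, w b * H b j) - Real.log (∑ a, w' a * H a j))
              - (w a * H a j / (∑ b, w b * H b j))
                * (Real.log (w a) - Real.log (w' a))) :=
              Finset.sum_congr rfl fun a _ => by ring
          _ = (∑ a, (w a * H a j / (∑ b, w b * H b j))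
                * (Real.log (∑ b, w b * H b j) - Real.log (∑ a, w' a * H a j)))
              - ∑ a, (w a * H a j / (∑ b, w b * H b j))
                * (Real.log (w a) - Real.log (w' a)) := Finset.sum_sub_distrib _ _
          _ = _ := by rw [← Finset.sum_mul, hsum1, one_mul]
      rw [big2, sub_nonpos] at big
      have hmul := mul_le_mul_of_nonneg_left big hxj.le
      rw [Finset.mul_sum] at hmul
      calc x j * (Real.log (∑ b, w b * H b j) - Real.log (∑ a, w' a * H a j))
          ≤ ∑ a, x j * ((w a * H a j / (∑ b, w b * H b j))
              * (Real.log (w a) - Real.log (w' a))) := hmul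
        _ = ∑ a, x j * (w a * H a j / (∑ b, w b * H b j))
              * (Real.log (w a) - Real.log (w' a)) :=
            Finset.sum_congr rfl fun a _ => by ring
  -- per-a final bound
  have final : ∀ a ∈ Finset.univ,
      (∑ j, x j * (w a * H a j / (∑ b, w b * H b j)))
          * (Real.log (w a) - Real.log (w' a))
        + (w' a - w a) * (∑ k, H a k + lam) ≤ 0 := by
    intro a _
    rw [← hcd a]
    have h1 := stmt_11_aux1 (hw a) (hw'nn a)
    have h3 : (∑ k, H a k + lam)
        * (w' a * (Real.log (w a) - Real.log (w' a)) + w' a - w a) ≤ 0 :=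
      mul_nonpos_of_nonneg_of_nonpos (hpos a).le h1
    nlinarith [h3]
  -- assemble
  have step1 : (∑ j, x j * (Real.log (∑ b, w b * H b j)
        - Real.log (∑ a, w' a * H a j)))
      + ∑ a, (w' a - w a) * (∑ k, H a k + lam) ≤ 0 := by
    calc (∑ j, x j * (Real.log (∑ b, w b * H b j)
            - Real.log (∑ a, w' a * H a j)))
          + ∑ a, (w' a - w a) * (∑ k, H a k + lam)
        ≤ (∑ j, ∑ a, x j * (w a * H a j / (∑ b, w b * H b j))
              * (Real.log (w a) - Real.log (w' a)))
          + ∑ a, (w' a - w a) * (∑ k, H a k + lam) :=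
          add_le_add (Finset.sum_le_sum fun j _ => hkey j) le_rfl
      _ = (∑ a, (∑ j, x j * (w a * H a j / (∑ b, w b * H b j)))
              * (Real.log (w a) - Real.log (w' a)))
          + ∑ a, (w' a - w a) * (∑ k, H a k + lam) := by
          rw [Finset.sum_comm]
          congr 1
          exact Finset.sum_congr rfl fun a _ => (Finset.sum_mul _ _ _).symm
      _ = ∑ a, ((∑ j, x j * (w a * H a j / (∑ b, w b * H b j)))
              * (Real.log (w a) - Real.log (w' a))
            + (w' a - w a) * (∑ k, H a k + lam)) := Finset.sum_add_distrib.symm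
      _ ≤ 0 := Finset.sum_nonpos final
  have e1 : ∀ v : Fin r → ℝ,
      (∑ j, (-(x j) * Real.log (∑ a, v a * H a j) + ∑ a, v a * H a j))
        = (∑ j, -(x j) * Real.log (∑ a, v a * H a j)) + ∑ j, ∑ a, v a * H a j :=
    fun v => Finset.sum_add_distrib
  have e2 : ∀ v : Fin r → ℝ, (∑ j, ∑ a, v a * H a j) = ∑ a, v a * ∑ k, H a k := by
    intro v
    rw [Finset.sum_comm]
    exact Finset.sum_congr rfl fun a _ => (Finset.mul_sum _ _ _).symm
  have e3 : (∑ j, x j * (Real.log (∑ b, w b * H b j)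
        - Real.log (∑ a, w' a * H a j)))
      = (∑ j, -(x j) * Real.log (∑ a, w' a * H a j))
        - ∑ j, -(x j) * Real.log (∑ b, w b * H b j) := by
    rw [← Finset.sum_sub_distrib]
    exact Finset.sum_congr rfl fun j _ => by ring
  have e4 : (∑ a, (w' a - w a) * (∑ k, H a k + lam))
      = ((∑ a, w' a * ∑ k, H a k) + lam * ∑ a, w' a)
        - ((∑ a, w a * ∑ k, H a k) + lam * ∑ a, w a) := by
    rw [Finset.mul_sum, Finset.mul_sum, ← Finset.sum_add_distrib,
      ← Finset.sum_add_distrib, ← Finset.sum_sub_distrib]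
    exact Finset.sum_congr rfl fun a _ => by ring
  rw [e1 w', e1 w, e2 w', e2 w]
  rw [e3, e4] at step1
  linarith
end

section
/- Let W ∈ ℝ^{n×r} and H ∈ ℝ^{r×m} have nonnegative entries, with strict positivity wherever divisions occur. If W and the update (14) fix W (i.e., W_{ia} = W_{ia} · (Σ_j H_{aj} X_{ij}/(WH)_{ij}) / (Σ_j H_{aj} + λ) for all i, a) and additionally W_{ia} > 0 for all i, a, then W satisfies the KKT conditions W .* ∇_W F = 0 and ∇_W F ≥ 0 for the problem min_{W ≥ 0} F(W) = Σ_{ij}(−X_{ij} log(WH)_{ij} + (WH)_{ij}) + λ Σ_{ij} W_{ij}. -/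
open Finset in
theorem stmt_19 {n r m : ℕ} (X : Matrix (Fin n) (Fin m) ℝ)
    (W : Matrix (Fin n) (Fin r) ℝ) (H : Matrix (Fin r) (Fin m) ℝ) (lam : ℝ)
    (hX : ∀ i j, 0 < X i j) (hH : ∀ a j, 0 ≤ H a j) (hlam : 0 ≤ lam)
    (hW : ∀ i a, 0 < W i a)
    (hWH : ∀ i j, 0 < (W * H) i j)
    (hden : ∀ a, (0:ℝ) < ∑ j, H a j + lam)
    (hfix : ∀ i a, W i a = W i a * (∑ j, H a j * X i j / (W * H) i j)
        / (∑ j, H a j + lam)) :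
    ∀ i a,
      (W i a * ((∑ j, H a j) - (∑ j, X i j * H a j / (W * H) i j) + lam) = 0) ∧
      (0 ≤ (∑ j, H a j) - (∑ j, X i j * H a j / (W * H) i j) + lam) := by
  intro i a
  have hsum : (∑ j, X i j * H a j / (W * H) i j)
      = ∑ j, H a j * X i j / (W * H) i j := by
    apply Finset.sum_congr rfl; intro j _; ring
  have h := hfix i a
  have hWia := (hW i a).ne'
  have hd := (hden a).ne'
  have key : (∑ j, H a j * X i j / (W * H) i j) = ∑ j, H a j + lam := by
    field_simp at h
    exact h.symm
  rw [hsum, key]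
  constructor <;> ring_nf <;> simp
end
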